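/- Define f(x) = ∑_{k=1}^∞ cos(2πkx)/(k·(log(κk))^μ) with κ ≥ exp(e²) and μ > 1. Then f is continuous on [0,1], but for every β > 0 and every L > 0 there exists x ∈ (0,1) with f(0) − f(x) > L·x^β; in particular f is not Hölder continuous of any positive exponent at 0. -/

import Mathlib

open Real

set_option maxHeartbeats 1000000 in
theorem log_korobov_function_not_holder (μ κ : ℝ) (hμ : 1 < μ)
    (hκ : Real.exp (Real.exp 2) ≤ κ)
    (f : ℝ → ℝ)
    (hf : f = fun x : ℝ => ∑' k : ℕ,
      Real.cos (2 * Real.pi * ((k : ℝ) + 1) * x) /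
        (((k : ℝ) + 1) * (Real.log (κ * ((k : ℝ) + 1))) ^ μ)) :
    ContinuousOn f (Set.Icc 0 1) ∧
      ∀ β : ℝ, 0 < β → ∀ L : ℝ, 0 < L →
        ∃ x ∈ Set.Ioo (0 : ℝ) 1, L * x ^ β < f 0 - f x := by
  have hμ0 : (0:ℝ) ≤ μ := by linarith
  have hκ1 : 1 < κ := by
    have h1 : (1:ℝ) = Real.exp 0 := Real.exp_zero.symm
    have h2 : Real.exp 0 < Real.exp (Real.exp 2) := Real.exp_lt_exp.2 (Real.exp_pos 2)
    linarith
  have hκ0 : 0 < κ := lt_trans one_pos hκ1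
  have hlogκ : 1 ≤ Real.log κ := by
    have h1 : Real.exp 2 ≤ Real.log κ := by
      rw [← Real.log_exp (Real.exp 2)]
      exact Real.log_le_log (Real.exp_pos _) hκ
    have h2 : (1:ℝ) ≤ Real.exp 2 := Real.one_le_exp (by norm_num)
    linarith
  set d : ℕ → ℝ := fun k => ((k : ℝ) + 1) * (Real.log (κ * ((k : ℝ) + 1))) ^ μ with hd_def
  have hlogk : ∀ k : ℕ, 1 ≤ Real.log (κ * ((k:ℝ)+1)) := by
    intro k
    have hk0 : (0:ℝ) ≤ (k:ℝ) := Nat.cast_nonneg k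
    have h1 : κ ≤ κ * ((k:ℝ)+1) := by nlinarith
    have := Real.log_le_log hκ0 h1
    linarith
  have hd : ∀ k, 0 < d k := by
    intro k
    have h1 := hlogk k
    exact mul_pos (by positivity) (Real.rpow_pos_of_pos (by linarith) μ)
  -- summability of the majorant
  set g : ℕ → ℝ := fun n => 1 / ((n:ℝ) * (Real.log (κ * (n:ℝ))) ^ μ) with hg_def
  have hlogg : ∀ n : ℕ, 0 ≤ Real.log (κ * (n:ℝ)) := by
    intro n
    rcases Nat.eq_zero_or_pos n with h | h
    · simp [h]
    · apply Real.log_nonneg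
      have h1 : (1:ℝ) ≤ (n:ℝ) := by exact_mod_cast h
      nlinarith
  have hg_nonneg : ∀ n, 0 ≤ g n := by
    intro n
    apply one_div_nonneg.2
    exact mul_nonneg (Nat.cast_nonneg n) (Real.rpow_nonneg (hlogg n) μ)
  have hg_anti : ∀ ⦃m n : ℕ⦄, 0 < m → m ≤ n → g n ≤ g m := by
    intro m n hm hmn
    have hm1 : (1:ℝ) ≤ (m:ℝ) := by exact_mod_cast hm
    have hmn' : (m:ℝ) ≤ (n:ℝ) := by exact_mod_cast hmn
    have hlm : 1 ≤ Real.log (κ * (m:ℝ)) := by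
      have h1 : κ ≤ κ * m := by nlinarith
      have := Real.log_le_log hκ0 h1
      linarith
    apply one_div_le_one_div_of_le
    · exact mul_pos (by linarith) (Real.rpow_pos_of_pos (by linarith) μ)
    · apply mul_le_mul hmn'
      · exact Real.rpow_le_rpow (by linarith) (Real.log_le_log (by nlinarith) (by nlinarith)) hμ0
      · exact Real.rpow_nonneg (by linarith) μ
      · linarith
  have hcond : Summable (fun n : ℕ => (2:ℝ)^n * g (2^n)) := by
    have hb : Summable (fun n : ℕ => (((n:ℝ)+1) ^ μ)⁻¹ * ((Real.log 2) ^ μ)⁻¹) := by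
      apply Summable.mul_right
      have h0 : Summable (fun n : ℕ => ((n:ℝ) ^ μ)⁻¹) := Real.summable_nat_rpow_inv.2 hμ
      have h1 := (summable_nat_add_iff 1).2 h0
      apply h1.congr
      intro k
      push_cast
      ring
    apply Summable.of_nonneg_of_le
      (fun n => mul_nonneg (by positivity) (hg_nonneg _)) _ hb
    intro n
    have h2n : (0:ℝ) < 2^n := by positivity
    have hcast : ((2^n : ℕ):ℝ) = 2^n := by push_cast; ring
    have hlog2 : Real.log 2 ≤ 1 := by
      have := Real.log_le_sub_one_of_pos (by norm_num : (0:ℝ) < 2)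
      linarith
    have hlog2pos : 0 < Real.log 2 := Real.log_pos (by norm_num)
    have hn0 : (0:ℝ) ≤ (n:ℝ) := Nat.cast_nonneg n
    have hkey : ((n:ℝ)+1) * Real.log 2 ≤ Real.log (κ * 2^n) := by
      rw [Real.log_mul (ne_of_gt hκ0) (ne_of_gt h2n), Real.log_pow]
      nlinarith
    calc (2:ℝ)^n * g (2^n) = ((Real.log (κ * 2^n)) ^ μ)⁻¹ := by
          simp only [hg_def, hcast]
          rw [one_div, mul_inv, ← mul_assoc, mul_inv_cancel₀ (ne_of_gt h2n), one_mul]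
      _ ≤ ((((n:ℝ)+1) * Real.log 2) ^ μ)⁻¹ := by
          apply inv_anti₀
          · exact Real.rpow_pos_of_pos (by positivity) μ
          · exact Real.rpow_le_rpow (by positivity) hkey hμ0
      _ = (((n:ℝ)+1) ^ μ)⁻¹ * ((Real.log 2) ^ μ)⁻¹ := by
          rw [Real.mul_rpow (by positivity) (le_of_lt hlog2pos), mul_inv]
  have hg_sum : Summable g := (summable_condensed_iff_of_nonneg hg_nonneg hg_anti).1 hcond
  have ha : Summable (fun k : ℕ => 1 / d k) := by
    have h1 := (summable_nat_add_iff 1).2 hg_sum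
    apply h1.congr
    intro k
    simp only [hg_def, hd_def]
    push_cast
    ring_nf
  -- summability of the cosine series, for any x
  have hbound : ∀ (x : ℝ) (k : ℕ),
      ‖Real.cos (2 * Real.pi * ((k : ℝ) + 1) * x) / d k‖ ≤ 1 / d k := by
    intro x k
    rw [Real.norm_eq_abs, abs_div, abs_of_pos (hd k)]
    exact (div_le_div_iff_of_pos_right (hd k)).2 (Real.abs_cos_le_one _)
  have hs2 : ∀ x : ℝ, Summable (fun k : ℕ =>
      Real.cos (2 * Real.pi * ((k : ℝ) + 1) * x) / d k) := by
    intro x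
    exact Summable.of_norm_bounded ha (hbound x)
  have hfx : ∀ x : ℝ, f x = ∑' k : ℕ, Real.cos (2 * Real.pi * ((k : ℝ) + 1) * x) / d k := by
    intro x
    rw [hf]
  have hf0 : f 0 = ∑' k : ℕ, 1 / d k := by
    rw [hfx 0]
    congr 1
    funext k
    rw [mul_zero, Real.cos_zero]
  have hcont : Continuous f := by
    rw [hf]
    apply continuous_tsum (u := fun k => 1 / d k) ?_ ha ?_
    · intro k
      exact (Real.continuous_cos.comp (by continuity)).div_const _
    · intro k x
      exact hbound x k
  refine ⟨hcont.continuousOn, ?_⟩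
  intro β hβ L hL
  have hκβ : 0 < κ ^ β := Real.rpow_pos_of_pos hκ0 β
  set c : ℝ := 1 / (4 * L * κ ^ β) with hc_def
  have hc : 0 < c := by positivity
  have hev : ∀ᶠ y : ℝ in Filter.atTop, Real.log y ^ μ ≤ c * y ^ β := by
    have h := (isLittleO_log_rpow_rpow_atTop μ hβ).def hc
    filter_upwards [h, Filter.eventually_ge_atTop (1:ℝ)] with y h1 h2
    rwa [Real.norm_eq_abs, Real.norm_eq_abs,
      abs_of_nonneg (Real.rpow_nonneg (Real.log_nonneg h2) μ),
      abs_of_nonneg (Real.rpow_nonneg (by linarith) β)] at h1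
  have hT : Filter.Tendsto (fun n : ℕ => κ * ((4*n : ℕ):ℝ)) Filter.atTop Filter.atTop := by
    apply Filter.Tendsto.const_mul_atTop hκ0
    apply Filter.tendsto_atTop_mono _ tendsto_natCast_atTop_atTop
    intro n
    exact_mod_cast (by omega : n ≤ 4*n)
  have hev2 := (hT.eventually hev).and (Filter.eventually_ge_atTop 1)
  obtain ⟨n, hn2, hn1⟩ := hev2.exists
  set N : ℕ := 4*n with hN_def
  have hN4 : 4 ≤ N := by omega
  have hN0 : (0:ℝ) < (N:ℝ) := by exact_mod_cast (by omega : 0 < N)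
  have hNn : (N:ℝ) = 4 * (n:ℝ) := by push_cast [hN_def]; ring
  have hnn0 : (0:ℝ) < (n:ℝ) := by exact_mod_cast (by omega : 0 < n)
  set C : ℝ := (Real.log (κ * (N:ℝ))) ^ μ with hC_def
  have hlogN : 1 ≤ Real.log (κ * (N:ℝ)) := by
    have hN1 : (1:ℝ) ≤ (N:ℝ) := by exact_mod_cast (by omega : 1 ≤ N)
    have h1 : κ ≤ κ * N := by nlinarith
    have := Real.log_le_log hκ0 h1
    linarith
  have hC0 : 0 < C := Real.rpow_pos_of_pos (by linarith) μ
  -- the key inequality from the choice of n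
  have hKI : 2 * L * C < (N:ℝ) ^ β := by
    have hmul : (κ * (N:ℝ)) ^ β = κ ^ β * (N:ℝ) ^ β :=
      Real.mul_rpow (le_of_lt hκ0) (le_of_lt hN0)
    have hcκ : c * κ ^ β = 1 / (4 * L) := by
      rw [hc_def]; field_simp
    have hNβ : 0 < (N:ℝ) ^ β := Real.rpow_pos_of_pos hN0 β
    have h2 : C ≤ c * (κ ^ β * (N:ℝ) ^ β) := by
      rw [hC_def, ← hmul]; exact hn2
    have h3 : c * (κ ^ β * (N:ℝ) ^ β) = (N:ℝ) ^ β / (4 * L) := by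
      rw [← mul_assoc, hcκ]; ring
    rw [h3] at h2
    calc 2 * L * C ≤ 2 * L * ((N:ℝ) ^ β / (4 * L)) := by nlinarith
      _ = (N:ℝ) ^ β / 2 := by field_simp; ring
      _ < (N:ℝ) ^ β := by linarith
  -- the point x
  set x : ℝ := 1 / (N:ℝ) with hx_def
  have hx_mem : x ∈ Set.Ioo (0:ℝ) 1 := by
    constructor
    · positivity
    · rw [hx_def, div_lt_one hN0]
      exact_mod_cast (by omega : 1 < N)
  refine ⟨x, hx_mem, ?_⟩
  -- lower bound on f 0 - f x
  have hdiff : f 0 - f x = ∑' k : ℕ,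
      (1 - Real.cos (2 * Real.pi * ((k : ℝ) + 1) * x)) / d k := by
    have ht := Summable.tsum_sub ha (hs2 x)
    rw [hf0, hfx x, ← ht]
    apply tsum_congr
    intro k
    rw [sub_div]
  have hterm_nonneg : ∀ k : ℕ,
      0 ≤ (1 - Real.cos (2 * Real.pi * ((k : ℝ) + 1) * x)) / d k := by
    intro k
    apply div_nonneg _ (le_of_lt (hd k))
    have := Real.cos_le_one (2 * Real.pi * ((k : ℝ) + 1) * x)
    linarith
  have hsum_diff : Summable (fun k : ℕ =>
      (1 - Real.cos (2 * Real.pi * ((k : ℝ) + 1) * x)) / d k) := by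
    refine Summable.congr (ha.sub (hs2 x)) fun k => ?_
    rw [sub_div]
  set s : Finset ℕ := Finset.Icc (n-1) (2*n-1) with hs_def
  set b : ℝ := 1 / ((2 * (n:ℝ)) * C) with hb_def
  have hb0 : 0 < b := by positivity
  have hterm_ge : ∀ k ∈ s, b ≤ (1 - Real.cos (2 * Real.pi * ((k : ℝ) + 1) * x)) / d k := by
    intro k hk
    rw [hs_def, Finset.mem_Icc] at hk
    have hk1 : n ≤ k + 1 := by omega
    have hk2 : k + 1 ≤ 2*n := by omega
    have hk1' : (n:ℝ) ≤ (k:ℝ) + 1 := by exact_mod_cast hk1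
    have hk2' : (k:ℝ) + 1 ≤ 2 * (n:ℝ) := by
      have : ((k+1 : ℕ):ℝ) ≤ ((2*n : ℕ):ℝ) := by exact_mod_cast hk2
      push_cast at this; linarith
    have hpi := Real.pi_pos
    have hcos : Real.cos (2 * Real.pi * ((k : ℝ) + 1) * x) ≤ 0 := by
      apply Real.cos_nonpos_of_pi_div_two_le_of_le
      · rw [hx_def, mul_one_div, le_div_iff₀ hN0, hNn]
        nlinarith
      · rw [hx_def, mul_one_div, div_le_iff₀ hN0, hNn]
        nlinarith
    have hdk : d k ≤ (2 * (n:ℝ)) * C := by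
      simp only [hd_def, hC_def]
      apply mul_le_mul hk2'
      · apply Real.rpow_le_rpow (by linarith [hlogk k]) _ hμ0
        apply Real.log_le_log (by positivity)
        rw [hNn]
        nlinarith
      · exact Real.rpow_nonneg (by linarith [hlogk k]) μ
      · linarith
    calc b ≤ 1 / d k := by
          rw [hb_def]
          exact one_div_le_one_div_of_le (hd k) hdk
      _ ≤ (1 - Real.cos (2 * Real.pi * ((k : ℝ) + 1) * x)) / d k := by
          apply (div_le_div_iff_of_pos_right (hd k)).2
          linarith
  have hcard : s.card = n + 1 := by
    rw [hs_def, Nat.card_Icc]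
    omega
  have hsum_ge : ((n:ℝ) + 1) * b ≤ ∑ k ∈ s,
      (1 - Real.cos (2 * Real.pi * ((k : ℝ) + 1) * x)) / d k := by
    have h := Finset.card_nsmul_le_sum s _ b hterm_ge
    rwa [hcard, nsmul_eq_mul, Nat.cast_add, Nat.cast_one] at h
  have hfin_le : ∑ k ∈ s, (1 - Real.cos (2 * Real.pi * ((k : ℝ) + 1) * x)) / d k
      ≤ f 0 - f x := by
    rw [hdiff]
    exact Summable.sum_le_tsum s (fun k _ => hterm_nonneg k) hsum_diff
  have hnb : 1 / (2 * C) ≤ ((n:ℝ) + 1) * b := by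
    rw [hb_def, mul_one_div, div_le_div_iff₀ (by positivity) (by positivity)]
    nlinarith [hC0, hnn0]
  have hLx : L * x ^ β < 1 / (2 * C) := by
    have hNβ : 0 < (N:ℝ) ^ β := Real.rpow_pos_of_pos hN0 β
    have hxβ : x ^ β = 1 / (N:ℝ) ^ β := by
      rw [hx_def, Real.div_rpow (by norm_num) (le_of_lt hN0), Real.one_rpow]
    rw [hxβ, mul_one_div, div_lt_div_iff₀ hNβ (by positivity)]
    nlinarith
  linarith
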